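/- arXiv:2402.05724 — 2 statements merged into one kernel-verified Lean document; each statement's English description precedes it below -/
import Mathlib

section
/- Let 𝓜 be a finite nonempty class of mean-field MDPs on common finite S, A, horizon H and initial distribution μ₁, all sharing the reward functions r_h, and assume the global Lipschitz conditions: for all M ∈ 𝓜, all h, s, a and all μ, μ' ∈ Δ(S), ‖P_{M,h}(·|s,a,μ) − P_{M,h}(·|s,a,μ')‖₁ ≤ L_T·‖μ−μ'‖₁ and |r_h(s,a,μ) − r_h(s,a,μ')| ≤ L_r·‖μ−μ'‖₁, where L_T, L_r > 0. Fix ε₀ > 0, for each policy π fix a central model M_Ctr^π ∈ argmax_{M∈𝓜} |B^{ε₀}_π(M;𝓜)|, and suppose |B^{ε₀}_π(M_Ctr^π;𝓜)| > |𝓜|/2 for every π ∈ Π. Let ε̄ > 0 satisfy 2H(H+1)((1+L_T)^H − 1)·ε̄ ≤ ε₀ and 2H·ε̄ ≤ ε₀, and let Π_ε̄ be a finite ε̄-cover of Π with respect to d_{∞,1}. Define, for each π ∈ Π, h, s, a, the bridge model by P̈_{Br,h}(·|s,a,π) := (Σ_{π̃∈Π_ε̄} w_π(π̃)·P_{M_Ctr^{π̃},h}(·|s,a,μ^{π̃}_{M_Ctr^{π̃},h}))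 / (Σ_{π̃∈Π_ε̄} w_π(π̃)) and r̈_{Br,h}(s,a,π) := (Σ_{π̃∈Π_ε̄} w_π(π̃)·r_h(s,a,μ^{π̃}_{M_Ctr^{π̃},h})) / (Σ_{π̃∈Π_ε̄} w_π(π̃)), where w_π(π̃) := max{2ε̄ − d_{∞,1}(π,π̃), 0}. Then the bridge model is well defined (the denominator is strictly positive for every π), and for every π ∈ Π: max_{π̃∈Π} E_{π̃,M_Ctr^π(π)}[Σ_{h=1}^H ‖P_{M_Ctr^π,h}(·|s_h,a_h,μ^π_{M_Ctr^π,h}) − P̈_{Br,h}(·|s_h,a_h,π)‖₁] ≤ (H+3)·ε₀, and max_{π̃∈Π} E_{π̃,M_Ctr^π(π)}[Σ_{h=1}^H |r_h(s_h,a_h,μ^π_{M_Ctr^π,h}) − r̈_{Br,h}(s_h,a_h,π)|] ≤ L_r·H·(H+4)·ε₀. -/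
/-- ℓ1 distance between two functions on a finite type. -/
def l1 {X : Type*} [Fintype X] (p q : X → ℝ) : ℝ := ∑ x, |p x - q x|

/-- A (nonstationary Markov) policy: at each step `h` (0-indexed) and state `s`,
`π h s` is a probability distribution over actions. -/
def IsPolicy {S A : Type*} [Fintype A] (π : ℕ → S → A → ℝ) : Prop :=
  ∀ h s, (∀ a, 0 ≤ π h s a) ∧ ∑ a, π h s a = 1

/-- The transition kernels of a mean-field MDP with horizon `H`:
at each step `h < H`, `P h s a μ ∈ Δ(S)` whenever `μ ∈ Δ(S)`. -/
def IsKernel {S A : Type*} [Fintype S] (H : ℕ) (P : ℕ → S → A → (S → ℝ) → S → ℝ) : Prop :=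
  ∀ h, h < H → ∀ s a (μ : S → ℝ), μ ∈ stdSimplex ℝ S → P h s a μ ∈ stdSimplex ℝ S

/-- Induced state densities: `dens P μ₁ π h = μ^π_{M,h+1}` (1-indexed step `h+1`). -/
def dens {S A : Type*} [Fintype S] [Fintype A] (P : ℕ → S → A → (S → ℝ) → S → ℝ)
    (μ₁ : S → ℝ) (π : ℕ → S → A → ℝ) : ℕ → S → ℝ
  | 0 => μ₁
  | h + 1 => fun s' => ∑ s, ∑ a, dens P μ₁ π h s * π h s a * P h s a (dens P μ₁ π h) s'

/-- The state law of executing `π̃` while the kernels are frozen at the densities induced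
by the reference policy `π` in model `M = (P, μ₁)`. -/
def densF {S A : Type*} [Fintype S] [Fintype A] (P : ℕ → S → A → (S → ℝ) → S → ℝ)
    (μ₁ : S → ℝ) (π πt : ℕ → S → A → ℝ) : ℕ → S → ℝ
  | 0 => μ₁
  | h + 1 => fun s' => ∑ s, ∑ a, densF P μ₁ π πt h s * πt h s a * P h s a (dens P μ₁ π h) s'

/-- `E_{π̃,M(π)}[Σ_{h=1}^H f_h(s_h,a_h)]`. -/
def expF {S A : Type*} [Fintype S] [Fintype A] (H : ℕ) (P : ℕ → S → A → (S → ℝ) → S → ℝ)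
    (μ₁ : S → ℝ) (π πt : ℕ → S → A → ℝ) (f : ℕ → S → A → ℝ) : ℝ :=
  ∑ h ∈ Finset.range H, ∑ s, ∑ a, densF P μ₁ π πt h s * πt h s a * f h s a

/-- The return `J_M(π̃;π)` of executing `π̃` with transitions and rewards frozen by `π`. -/
def Jret {S A : Type*} [Fintype S] [Fintype A] (H : ℕ) (P : ℕ → S → A → (S → ℝ) → S → ℝ)
    (r : ℕ → S → A → (S → ℝ) → ℝ) (μ₁ : S → ℝ) (πt π : ℕ → S → A → ℝ) : ℝ :=
  expF H P μ₁ π πt fun h s a => r h s a (dens P μ₁ π h)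

/-- One-sided conditional model distance `d^{π̃}(M,M'|π)`. -/
def dCond {S A : Type*} [Fintype S] [Fintype A] (H : ℕ)
    (P P' : ℕ → S → A → (S → ℝ) → S → ℝ) (μ₁ : S → ℝ) (π πt : ℕ → S → A → ℝ) : ℝ :=
  expF H P μ₁ π πt fun h s a => l1 (P h s a (dens P μ₁ π h)) (P' h s a (dens P' μ₁ π h))

/-- The distance `d_{∞,1}(π,π') = max_{h<H, s} ‖π_h(·|s) − π'_h(·|s)‖₁` on policies. -/
noncomputable def dInf {S A : Type*} [Fintype A] (H : ℕ) (π π' : ℕ → S → A → ℝ) : ℝ :=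
  sSup {x : ℝ | ∃ h < H, ∃ s : S, x = l1 (π h s) (π' h s)}

/-- The `ε₀`-neighborhood `B^{ε₀}_π(m;𝓜)` of the model `m` in the model class indexed by
`ι`, conditioned on the reference policy `π`. -/
def nbhd {S A ι : Type*} [Fintype S] [Fintype A] (H : ℕ)
    (P : ι → ℕ → S → A → (S → ℝ) → S → ℝ) (μ₁ : S → ℝ) (ε₀ : ℝ)
    (π : ℕ → S → A → ℝ) (m : ι) : Set ι :=
  {m' | ∀ πt, IsPolicy πt →
    dCond H (P m) (P m') μ₁ π πt ≤ ε₀ ∧ dCond H (P m') (P m) μ₁ π πt ≤ ε₀}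

section MFHelpers
variable {S A X : Type*} [Fintype S] [Fintype A] [Fintype X]
variable {H : ℕ} {P : ℕ → S → A → (S → ℝ) → S → ℝ} {μ₁ : S → ℝ} {π πt : ℕ → S → A → ℝ}

lemma l1_nonneg' {X : Type*} [Fintype X] (p q : X → ℝ) : 0 ≤ l1 p q :=
  Finset.sum_nonneg fun _ _ => abs_nonneg _

lemma l1_comm' {X : Type*} [Fintype X] (p q : X → ℝ) : l1 p q = l1 q p := by
  unfold l1; congr 1; funext x; exact abs_sub_comm _ _

lemma l1_triangle' {X : Type*} [Fintype X] (p q r : X → ℝ) : l1 p r ≤ l1 p q + l1 q r := by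
  unfold l1; rw [← Finset.sum_add_distrib]
  exact Finset.sum_le_sum fun x _ => abs_sub_le _ _ _

lemma l1_le_two' {X : Type*} [Fintype X] {p q : X → ℝ}
    (hp : p ∈ stdSimplex ℝ X) (hq : q ∈ stdSimplex ℝ X) : l1 p q ≤ 2 := by
  have : l1 p q ≤ ∑ x, (p x + q x) := by
    refine Finset.sum_le_sum fun x _ => ?_
    calc |p x - q x| ≤ |p x| + |q x| := abs_sub _ _
    _ = p x + q x := by rw [abs_of_nonneg (hp.1 x), abs_of_nonneg (hq.1 x)]
  simpa [Finset.sum_add_distrib, hp.2, hq.2, one_add_one_eq_two] using this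

lemma chain_step (ν ν' : S → ℝ) (p p' : S → A → ℝ) (K K' : S → A → S → ℝ)
    (hν : ∀ s, 0 ≤ ν s)
    (hp : ∀ s, (∀ a, 0 ≤ p s a) ∧ ∑ a, p s a = 1)
    (hp' : ∀ s, (∀ a, 0 ≤ p' s a) ∧ ∑ a, p' s a = 1)
    (hK' : ∀ s a, (∀ s', 0 ≤ K' s a s') ∧ ∑ s', K' s a s' = 1) :
    l1 (fun s' => ∑ s, ∑ a, ν s * p s a * K s a s')
       (fun s' => ∑ s, ∑ a, ν' s * p' s a * K' s a s')
    ≤ l1 ν ν' + (∑ s, ν s * l1 (p s) (p' s))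
      + ∑ s, ν s * ∑ a, p s a * l1 (K s a) (K' s a) := by
  have key : ∀ s', |(∑ s, ∑ a, ν s * p s a * K s a s') - ∑ s, ∑ a, ν' s * p' s a * K' s a s'|
      ≤ ∑ s, ∑ a, (|ν s - ν' s| * p' s a * K' s a s'
        + ν s * |p s a - p' s a| * K' s a s'
        + ν s * p s a * |K s a s' - K' s a s'|) := by
    intro s'
    have : (∑ s, ∑ a, ν s * p s a * K s a s') - ∑ s, ∑ a, ν' s * p' s a * K' s a s'
        = ∑ s, ∑ a, ((ν s - ν' s) * p' s a * K' s a s'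
          + ν s * (p s a - p' s a) * K' s a s'
          + ν s * p s a * (K s a s' - K' s a s')) := by
      rw [← Finset.sum_sub_distrib]
      refine Finset.sum_congr rfl fun s _ => ?_
      rw [← Finset.sum_sub_distrib]
      exact Finset.sum_congr rfl fun a _ => by ring
    rw [this]
    refine (Finset.abs_sum_le_sum_abs _ _).trans (Finset.sum_le_sum fun s _ => ?_)
    refine (Finset.abs_sum_le_sum_abs _ _).trans (Finset.sum_le_sum fun a _ => ?_)
    refine (abs_add_three _ _ _).trans ?_
    gcongr <;> simp [abs_mul, abs_of_nonneg, hν s, (hp s).1 a, (hp' s).1 a, (hK' s a).1 s',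
      mul_nonneg (hν s) ((hp s).1 a)]
  have h1 : l1 (fun s' => ∑ s, ∑ a, ν s * p s a * K s a s')
       (fun s' => ∑ s, ∑ a, ν' s * p' s a * K' s a s')
      ≤ ∑ s', ∑ s, ∑ a, (|ν s - ν' s| * p' s a * K' s a s'
        + ν s * |p s a - p' s a| * K' s a s'
        + ν s * p s a * |K s a s' - K' s a s'|) :=
    Finset.sum_le_sum fun s' _ => key s'
  refine h1.trans (le_of_eq ?_)
  rw [Finset.sum_comm]
  have per : ∀ s, (∑ s' : S, ∑ a, (|ν s - ν' s| * p' s a * K' s a s'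
        + ν s * |p s a - p' s a| * K' s a s'
        + ν s * p s a * |K s a s' - K' s a s'|))
      = |ν s - ν' s| + ν s * l1 (p s) (p' s)
        + ν s * ∑ a, p s a * l1 (K s a) (K' s a) := by
    intro s
    rw [Finset.sum_comm]
    simp only [Finset.sum_add_distrib]
    have e1 : ∑ a, ∑ s', |ν s - ν' s| * p' s a * K' s a s' = |ν s - ν' s| := by
      have : ∀ a, ∑ s', |ν s - ν' s| * p' s a * K' s a s' = |ν s - ν' s| * p' s a := by
        intro a; rw [← Finset.mul_sum, (hK' s a).2, mul_one]
      simp only [this]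
      rw [← Finset.mul_sum, (hp' s).2, mul_one]
    have e2 : ∑ a, ∑ s', ν s * |p s a - p' s a| * K' s a s' = ν s * l1 (p s) (p' s) := by
      have : ∀ a, ∑ s', ν s * |p s a - p' s a| * K' s a s' = ν s * |p s a - p' s a| := by
        intro a; rw [← Finset.mul_sum, (hK' s a).2, mul_one]
      simp only [this]
      rw [← Finset.mul_sum]; rfl
    have e3 : ∑ a, ∑ s', ν s * p s a * |K s a s' - K' s a s'|
        = ν s * ∑ a, p s a * l1 (K s a) (K' s a) := by
      have : ∀ a, ∑ s', ν s * p s a * |K s a s' - K' s a s'|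
          = ν s * (p s a * l1 (K s a) (K' s a)) := by
        intro a; rw [← Finset.mul_sum, mul_assoc]; rfl
      simp only [this]
      rw [← Finset.mul_sum]
    rw [e1, e2, e3]
  calc ∑ s, (∑ s' : S, ∑ a, (|ν s - ν' s| * p' s a * K' s a s'
        + ν s * |p s a - p' s a| * K' s a s'
        + ν s * p s a * |K s a s' - K' s a s'|))
      = ∑ s, (|ν s - ν' s| + ν s * l1 (p s) (p' s)
        + ν s * ∑ a, p s a * l1 (K s a) (K' s a)) :=
        Finset.sum_congr rfl fun s _ => per s
    _ = l1 ν ν' + (∑ s, ν s * l1 (p s) (p' s))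
      + ∑ s, ν s * ∑ a, p s a * l1 (K s a) (K' s a) := by
        rw [Finset.sum_add_distrib, Finset.sum_add_distrib]; rfl

lemma exp_change (ν ρ : S → ℝ) (pt : S → A → ℝ) (g : S → A → ℝ)
    (hν : ∀ s, 0 ≤ ν s) (hν1 : ∑ s, ν s = 1)
    (hρ : ∀ s, 0 ≤ ρ s) (hρ1 : ∑ s, ρ s = 1)
    (hpt : ∀ s, (∀ a, 0 ≤ pt s a) ∧ ∑ a, pt s a = 1)
    (hg : ∀ s a, 0 ≤ g s a) (hg2 : ∀ s a, g s a ≤ 2) :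
    ∑ s, ∑ a, ν s * pt s a * g s a ≤ (∑ s, ∑ a, ρ s * pt s a * g s a) + l1 ν ρ := by
  set G : S → ℝ := fun s => ∑ a, pt s a * g s a with hG
  have hG0 : ∀ s, 0 ≤ G s := fun s => Finset.sum_nonneg fun a _ =>
    mul_nonneg ((hpt s).1 a) (hg s a)
  have hG2 : ∀ s, G s ≤ 2 := by
    intro s
    calc G s ≤ ∑ a, pt s a * 2 := Finset.sum_le_sum fun a _ =>
          mul_le_mul_of_nonneg_left (hg2 s a) ((hpt s).1 a)
    _ = 2 := by rw [← Finset.sum_mul, (hpt s).2, one_mul]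
  have lhs_eq : ∀ (μ : S → ℝ), ∑ s, ∑ a, μ s * pt s a * g s a = ∑ s, μ s * G s := by
    intro μ; refine Finset.sum_congr rfl fun s _ => ?_
    rw [hG, Finset.mul_sum]
    exact Finset.sum_congr rfl fun a _ => (mul_assoc _ _ _)
  rw [lhs_eq, lhs_eq]
  have hz : ∑ s, (ν s - ρ s) = 0 := by
    rw [Finset.sum_sub_distrib, hν1, hρ1]; ring
  have expand : ∑ s, (ν s - ρ s) * (G s - 1)
      = (∑ s, ν s * G s - ∑ s, ρ s * G s) - ∑ s, (ν s - ρ s) := by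
    rw [← Finset.sum_sub_distrib, ← Finset.sum_sub_distrib]
    exact Finset.sum_congr rfl fun s _ => by ring
  have hb : ∑ s, (ν s - ρ s) * (G s - 1) ≤ l1 ν ρ := by
    refine Finset.sum_le_sum fun s _ => ?_
    calc (ν s - ρ s) * (G s - 1) ≤ |(ν s - ρ s) * (G s - 1)| := le_abs_self _
    _ = |ν s - ρ s| * |G s - 1| := abs_mul _ _
    _ ≤ |ν s - ρ s| * 1 := by
        refine mul_le_mul_of_nonneg_left ?_ (abs_nonneg _)
        rw [abs_le]; constructor <;> nlinarith [hG0 s, hG2 s]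
    _ = |ν s - ρ s| := mul_one _
  rw [expand, hz] at hb
  linarith

lemma step_sum (ν : S → ℝ) (p : S → A → ℝ) (K : S → A → S → ℝ)
    (hp : ∀ s, ∑ a, p s a = 1) (hK : ∀ s a, ∑ s', K s a s' = 1) :
    ∑ s', ∑ s, ∑ a, ν s * p s a * K s a s' = ∑ s, ν s := by
  rw [Finset.sum_comm]
  refine Finset.sum_congr rfl fun s _ => ?_
  rw [Finset.sum_comm]
  have : ∀ a, ∑ s', ν s * p s a * K s a s' = ν s * p s a := by
    intro a; rw [← Finset.mul_sum, hK s a, mul_one]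
  simp only [this]
  rw [← Finset.mul_sum, hp s, mul_one]

lemma dens_simplex (hμ : μ₁ ∈ stdSimplex ℝ S) (hP : IsKernel H P) (hπ : IsPolicy π) :
    ∀ h, h ≤ H → dens P μ₁ π h ∈ stdSimplex ℝ S := by
  intro h
  induction h with
  | zero => exact fun _ => hμ
  | succ n ih =>
    intro hn
    have hnH : n < H := Nat.lt_of_succ_le hn
    have hν := ih (Nat.le_of_lt hnH)
    have hKer : ∀ s a, P n s a (dens P μ₁ π n) ∈ stdSimplex ℝ S :=
      fun s a => hP n hnH s a _ hν
    constructor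
    · intro s'
      refine Finset.sum_nonneg fun s _ => Finset.sum_nonneg fun a _ =>
        mul_nonneg (mul_nonneg (hν.1 s) ((hπ n s).1 a)) ((hKer s a).1 s')
    · show ∑ s', ∑ s, ∑ a, _ = 1
      rw [step_sum _ _ _ (fun s => (hπ n s).2) (fun s a => (hKer s a).2)]
      exact hν.2

lemma densF_simplex (hμ : μ₁ ∈ stdSimplex ℝ S) (hP : IsKernel H P)
    (hπ : IsPolicy π) (hπt : IsPolicy πt) :
    ∀ h, h ≤ H → densF P μ₁ π πt h ∈ stdSimplex ℝ S := by
  intro h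
  induction h with
  | zero => exact fun _ => hμ
  | succ n ih =>
    intro hn
    have hnH : n < H := Nat.lt_of_succ_le hn
    have hν := ih (Nat.le_of_lt hnH)
    have hKer : ∀ s a, P n s a (dens P μ₁ π n) ∈ stdSimplex ℝ S :=
      fun s a => hP n hnH s a _ (dens_simplex hμ hP hπ n (Nat.le_of_lt hnH))
    constructor
    · intro s'
      refine Finset.sum_nonneg fun s _ => Finset.sum_nonneg fun a _ =>
        mul_nonneg (mul_nonneg (hν.1 s) ((hπt n s).1 a)) ((hKer s a).1 s')
    · show ∑ s', ∑ s, ∑ a, _ = 1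
      rw [step_sum _ _ _ (fun s => (hπt n s).2) (fun s a => (hKer s a).2)]
      exact hν.2

lemma dens_eq_densF : ∀ h, dens P μ₁ π h = densF P μ₁ π π h := by
  intro h
  induction h with
  | zero => rfl
  | succ n ih =>
    show (fun s' => ∑ s, ∑ a, dens P μ₁ π n s * π n s a * P n s a (dens P μ₁ π n) s')
      = fun s' => ∑ s, ∑ a, densF P μ₁ π π n s * π n s a * P n s a (dens P μ₁ π n) s'
    rw [ih]

lemma l1_self (p : X → ℝ) : l1 p p = 0 := by simp [l1]

lemma exp_shape (ν : S → ℝ) (p : S → A → ℝ) (g : S → A → ℝ) :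
    ∑ s, ν s * ∑ a, p s a * g s a = ∑ s, ∑ a, ν s * p s a * g s a := by
  refine Finset.sum_congr rfl fun s _ => ?_
  rw [Finset.mul_sum]
  exact Finset.sum_congr rfl fun a _ => (mul_assoc _ _ _).symm

lemma exp_term_nonneg (ν : S → ℝ) (p : S → A → ℝ) (g : S → A → ℝ)
    (hν : ∀ s, 0 ≤ ν s) (hp : ∀ s a, 0 ≤ p s a) (hg : ∀ s a, 0 ≤ g s a) :
    0 ≤ ∑ s, ∑ a, ν s * p s a * g s a :=
  Finset.sum_nonneg fun s _ => Finset.sum_nonneg fun a _ =>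
    mul_nonneg (mul_nonneg (hν s) (hp s a)) (hg s a)

lemma exp_term_le (ν : S → ℝ) (p : S → A → ℝ) (g : S → A → ℝ) (c : ℝ)
    (hν : ∀ s, 0 ≤ ν s) (hν1 : ∑ s, ν s = 1)
    (hp : ∀ s, (∀ a, 0 ≤ p s a) ∧ ∑ a, p s a = 1)
    (hg : ∀ s a, g s a ≤ c) :
    ∑ s, ∑ a, ν s * p s a * g s a ≤ c := by
  have : ∑ s, ∑ a, ν s * p s a * g s a ≤ ∑ s, ∑ a, ν s * p s a * c := by
    refine Finset.sum_le_sum fun s _ => Finset.sum_le_sum fun a _ => ?_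
    exact mul_le_mul_of_nonneg_left (hg s a) (mul_nonneg (hν s) ((hp s).1 a))
  refine this.trans (le_of_eq ?_)
  have : ∀ s, ∑ a, ν s * p s a * c = ν s * c := by
    intro s
    have : ∀ a, ν s * p s a * c = ν s * c * p s a := fun a => by ring
    simp only [this]
    rw [← Finset.mul_sum, (hp s).2, mul_one]
  simp only [this]
  rw [← Finset.sum_mul, hν1, one_mul]

lemma l1_convex {ι' : Type*} (fs : Finset ι') (w : ι' → ℝ)
    (hw : ∀ i ∈ fs, 0 ≤ w i) (hW : 0 < ∑ i ∈ fs, w i) (q : X → ℝ) (p : ι' → X → ℝ) :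
    l1 q (fun x => (∑ i ∈ fs, w i * p i x) / ∑ i ∈ fs, w i)
      ≤ ∑ i ∈ fs, w i / (∑ i ∈ fs, w i) * l1 q (p i) := by
  set W := ∑ i ∈ fs, w i with hWdef
  have key : ∀ x, q x - (∑ i ∈ fs, w i * p i x) / W = ∑ i ∈ fs, w i / W * (q x - p i x) := by
    intro x
    have h1 : ∑ i ∈ fs, w i / W * q x = q x := by
      rw [← Finset.sum_mul, ← Finset.sum_div, ← hWdef, div_self hW.ne', one_mul]
    have h2 : (∑ i ∈ fs, w i * p i x) / W = ∑ i ∈ fs, w i / W * p i x := by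
      rw [Finset.sum_div]
      exact Finset.sum_congr rfl fun i _ => by ring
    have e : ∑ i ∈ fs, w i / W * (q x - p i x)
        = (∑ i ∈ fs, w i / W * q x) - ∑ i ∈ fs, w i / W * p i x := by
      rw [← Finset.sum_sub_distrib]
      exact Finset.sum_congr rfl fun i _ => by ring
    rw [e, h1, ← h2]
  unfold l1
  simp only [key]
  calc ∑ x, |∑ i ∈ fs, w i / W * (q x - p i x)|
      ≤ ∑ x, ∑ i ∈ fs, (w i / W) * |q x - p i x| := by
        refine Finset.sum_le_sum fun x _ => ?_
        refine (Finset.abs_sum_le_sum_abs _ _).trans (Finset.sum_le_sum fun i hi => ?_)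
        rw [abs_mul, abs_of_nonneg (div_nonneg (hw i hi) hW.le)]
    _ = ∑ i ∈ fs, w i / W * ∑ x, |q x - p i x| := by
        rw [Finset.sum_comm]
        exact Finset.sum_congr rfl fun i _ => (Finset.mul_sum _ _ _).symm

lemma abs_convex {ι' : Type*} (fs : Finset ι') (w : ι' → ℝ)
    (hw : ∀ i ∈ fs, 0 ≤ w i) (hW : 0 < ∑ i ∈ fs, w i) (q : ℝ) (p : ι' → ℝ) :
    |q - (∑ i ∈ fs, w i * p i) / ∑ i ∈ fs, w i|
      ≤ ∑ i ∈ fs, w i / (∑ i ∈ fs, w i) * |q - p i| := by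
  set W := ∑ i ∈ fs, w i with hWdef
  have key : q - (∑ i ∈ fs, w i * p i) / W = ∑ i ∈ fs, w i / W * (q - p i) := by
    have h1 : ∑ i ∈ fs, w i / W * q = q := by
      rw [← Finset.sum_mul, ← Finset.sum_div, ← hWdef, div_self hW.ne', one_mul]
    have h2 : (∑ i ∈ fs, w i * p i) / W = ∑ i ∈ fs, w i / W * p i := by
      rw [Finset.sum_div]
      exact Finset.sum_congr rfl fun i _ => by ring
    have e : ∑ i ∈ fs, w i / W * (q - p i)
        = (∑ i ∈ fs, w i / W * q) - ∑ i ∈ fs, w i / W * p i := by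
      rw [← Finset.sum_sub_distrib]
      exact Finset.sum_congr rfl fun i _ => by ring
    rw [e, h1, ← h2]
  rw [key]
  refine (Finset.abs_sum_le_sum_abs _ _).trans (Finset.sum_le_sum fun i hi => ?_)
  rw [abs_mul, abs_of_nonneg (div_nonneg (hw i hi) hW.le)]

lemma exp_swap {ι' : Type*} (fs : Finset ι') (H : ℕ) (ν : ℕ → S → ℝ) (pt : ℕ → S → A → ℝ)
    (c : ι' → ℝ) (L : ι' → ℕ → S → A → ℝ) :
    ∑ h ∈ Finset.range H, ∑ s, ∑ a, ν h s * pt h s a * (∑ i ∈ fs, c i * L i h s a)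
    = ∑ i ∈ fs, c i * ∑ h ∈ Finset.range H, ∑ s, ∑ a, ν h s * pt h s a * L i h s a := by
  have e1 : ∀ h s a, ν h s * pt h s a * (∑ i ∈ fs, c i * L i h s a)
      = ∑ i ∈ fs, c i * (ν h s * pt h s a * L i h s a) := by
    intro h s a
    rw [Finset.mul_sum]
    exact Finset.sum_congr rfl fun i _ => by ring
  simp only [e1]
  have e2 : ∀ h : ℕ, (∑ s, ∑ a, ∑ i ∈ fs, c i * (ν h s * pt h s a * L i h s a))
      = ∑ i ∈ fs, ∑ s, ∑ a, c i * (ν h s * pt h s a * L i h s a) := by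
    intro h
    have inner : ∀ s, (∑ a, ∑ i ∈ fs, c i * (ν h s * pt h s a * L i h s a))
        = ∑ i ∈ fs, ∑ a, c i * (ν h s * pt h s a * L i h s a) := fun s => Finset.sum_comm
    simp only [inner]
    exact Finset.sum_comm
  simp only [e2]
  rw [Finset.sum_comm]
  refine Finset.sum_congr rfl fun i _ => ?_
  rw [Finset.mul_sum]
  refine Finset.sum_congr rfl fun h _ => ?_
  rw [Finset.mul_sum]
  exact Finset.sum_congr rfl fun s _ => (Finset.mul_sum _ _ _).symm


lemma densF_diff_le {P2 : ℕ → S → A → (S → ℝ) → S → ℝ} {π2 : ℕ → S → A → ℝ}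
    (hμ : μ₁ ∈ stdSimplex ℝ S) (hP : IsKernel H P) (hP2 : IsKernel H P2)
    (hπ : IsPolicy π) (hπ2 : IsPolicy π2) (hπt : IsPolicy πt) :
    ∀ h, h ≤ H → l1 (densF P μ₁ π πt h) (densF P2 μ₁ π2 πt h)
      ≤ ∑ k ∈ Finset.range h, ∑ s, ∑ a, densF P μ₁ π πt k s * πt k s a *
          l1 (P k s a (dens P μ₁ π k)) (P2 k s a (dens P2 μ₁ π2 k)) := by
  intro h
  induction h with
  | zero => intro _; simp [densF, l1_self]
  | succ n ih =>
    intro hn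
    have hnH : n < H := Nat.lt_of_succ_le hn
    have hν := densF_simplex hμ hP hπ hπt n (Nat.le_of_lt hnH)
    have hK2 : ∀ s a, P2 n s a (dens P2 μ₁ π2 n) ∈ stdSimplex ℝ S :=
      fun s a => hP2 n hnH s a _ (dens_simplex hμ hP2 hπ2 n (Nat.le_of_lt hnH))
    have step := chain_step (densF P μ₁ π πt n) (densF P2 μ₁ π2 πt n)
      (πt n) (πt n) (fun s a => P n s a (dens P μ₁ π n)) (fun s a => P2 n s a (dens P2 μ₁ π2 n))
      (fun s => hν.1 s) (fun s => hπt n s) (fun s => hπt n s)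
      (fun s a => ⟨fun s' => (hK2 s a).1 s', (hK2 s a).2⟩)
    have hstep : l1 (densF P μ₁ π πt (n + 1)) (densF P2 μ₁ π2 πt (n + 1))
        ≤ l1 (densF P μ₁ π πt n) (densF P2 μ₁ π2 πt n)
          + ∑ s, ∑ a, densF P μ₁ π πt n s * πt n s a *
            l1 (P n s a (dens P μ₁ π n)) (P2 n s a (dens P2 μ₁ π2 n)) := by
      refine le_trans (le_of_eq rfl) (step.trans (le_of_eq ?_))
      simp only [l1_self, mul_zero, Finset.sum_const_zero, add_zero]
      rw [exp_shape]
    rw [Finset.sum_range_succ]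
    exact hstep.trans (add_le_add_left (ih (Nat.le_of_lt hnH)) _)

lemma delta_bound {π2 : ℕ → S → A → ℝ} {L_T ε2 : ℝ}
    (hμ : μ₁ ∈ stdSimplex ℝ S) (hP : IsKernel H P)
    (hπ : IsPolicy π) (hπ2 : IsPolicy π2) (hLT : 0 < L_T) (hε2 : 0 ≤ ε2)
    (hlip : ∀ h, h < H → ∀ s a, ∀ μ ∈ stdSimplex ℝ S, ∀ μ' ∈ stdSimplex ℝ S,
      l1 (P h s a μ) (P h s a μ') ≤ L_T * l1 μ μ')
    (hclose : ∀ h, h < H → ∀ s, l1 (π h s) (π2 h s) ≤ ε2) :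
    ∀ h, h ≤ H → l1 (dens P μ₁ π h) (dens P μ₁ π2 h)
      ≤ ε2 * ∑ k ∈ Finset.range h, (1 + L_T) ^ k := by
  intro h
  induction h with
  | zero => intro _; simp [dens, l1_self]
  | succ n ih =>
    intro hn
    have hnH : n < H := Nat.lt_of_succ_le hn
    have hν := dens_simplex hμ hP hπ n (Nat.le_of_lt hnH)
    have hν2 := dens_simplex hμ hP hπ2 n (Nat.le_of_lt hnH)
    have hK2 : ∀ s a, P n s a (dens P μ₁ π2 n) ∈ stdSimplex ℝ S :=
      fun s a => hP n hnH s a _ hν2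
    have step := chain_step (dens P μ₁ π n) (dens P μ₁ π2 n)
      (π n) (π2 n) (fun s a => P n s a (dens P μ₁ π n)) (fun s a => P n s a (dens P μ₁ π2 n))
      (fun s => hν.1 s) (fun s => hπ n s) (fun s => hπ2 n s)
      (fun s a => ⟨fun s' => (hK2 s a).1 s', (hK2 s a).2⟩)
    have hterm2 : ∑ s, dens P μ₁ π n s * l1 (π n s) (π2 n s) ≤ ε2 := by
      calc ∑ s, dens P μ₁ π n s * l1 (π n s) (π2 n s)
          ≤ ∑ s, dens P μ₁ π n s * ε2 :=
            Finset.sum_le_sum fun s _ =>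
              mul_le_mul_of_nonneg_left (hclose n hnH s) (hν.1 s)
        _ = ε2 := by rw [← Finset.sum_mul, hν.2, one_mul]
    have hterm3 : ∑ s, dens P μ₁ π n s * ∑ a, π n s a *
        l1 (P n s a (dens P μ₁ π n)) (P n s a (dens P μ₁ π2 n))
        ≤ L_T * l1 (dens P μ₁ π n) (dens P μ₁ π2 n) := by
      rw [exp_shape]
      exact exp_term_le _ _ _ _ (fun s => hν.1 s) hν.2 (fun s => hπ n s)
        (fun s a => hlip n hnH s a _ hν _ hν2)
    have hrec := ih (Nat.le_of_lt hnH)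
    have hgs : (0:ℝ) ≤ ∑ k ∈ Finset.range n, (1 + L_T) ^ k :=
      Finset.sum_nonneg fun k _ => pow_nonneg (by linarith) k
    calc l1 (dens P μ₁ π (n + 1)) (dens P μ₁ π2 (n + 1))
        ≤ l1 (dens P μ₁ π n) (dens P μ₁ π2 n)
          + ∑ s, dens P μ₁ π n s * l1 (π n s) (π2 n s)
          + ∑ s, dens P μ₁ π n s * ∑ a, π n s a *
            l1 (P n s a (dens P μ₁ π n)) (P n s a (dens P μ₁ π2 n)) := step
      _ ≤ (1 + L_T) * l1 (dens P μ₁ π n) (dens P μ₁ π2 n) + ε2 := by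
          have h0 := l1_nonneg' (dens P μ₁ π n) (dens P μ₁ π2 n)
          linarith [hterm2, hterm3]
      _ ≤ (1 + L_T) * (ε2 * ∑ k ∈ Finset.range n, (1 + L_T) ^ k) + ε2 := by
          have : (0:ℝ) < 1 + L_T := by linarith
          nlinarith [hrec]
      _ = ε2 * ∑ k ∈ Finset.range (n + 1), (1 + L_T) ^ k := by
          rw [geom_sum_succ]
          ring

lemma dCond_partial_le {P2 : ℕ → S → A → (S → ℝ) → S → ℝ}
    (hμ : μ₁ ∈ stdSimplex ℝ S) (hP : IsKernel H P) (hP2 : IsKernel H P2)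
    (hπ : IsPolicy π) (hπt : IsPolicy πt) :
    ∀ h, h ≤ H → l1 (densF P μ₁ π πt h) (densF P2 μ₁ π πt h) ≤ dCond H P P2 μ₁ π πt := by
  intro h hh
  refine (densF_diff_le hμ hP hP2 hπ hπ hπt h hh).trans ?_
  have : dCond H P P2 μ₁ π πt = ∑ k ∈ Finset.range H, ∑ s, ∑ a,
      densF P μ₁ π πt k s * πt k s a *
        l1 (P k s a (dens P μ₁ π k)) (P2 k s a (dens P2 μ₁ π k)) := rfl
  rw [this]
  refine Finset.sum_le_sum_of_subset_of_nonneg (Finset.range_subset_range.2 hh) ?_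
  intro k hk _
  have hkH : k < H := Finset.mem_range.1 hk
  exact exp_term_nonneg _ _ _
    (fun s => (densF_simplex hμ hP hπ hπt k hkH.le).1 s)
    (fun s a => (hπt k s).1 a) (fun s a => l1_nonneg' _ _)

lemma key_trans {Pc Pm Pc' : ℕ → S → A → (S → ℝ) → S → ℝ} {π' : ℕ → S → A → ℝ}
    {L_T εb ε₀ : ℝ}
    (hμ : μ₁ ∈ stdSimplex ℝ S)
    (hKc : IsKernel H Pc) (hKm : IsKernel H Pm) (hKc' : IsKernel H Pc')
    (hπ : IsPolicy π) (hπ' : IsPolicy π') (hπt : IsPolicy πt)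
    (hLT : 0 < L_T) (hεb : 0 < εb) (hε₀ : 0 < ε₀)
    (hlip : ∀ h, h < H → ∀ s a, ∀ μ ∈ stdSimplex ℝ S, ∀ μ' ∈ stdSimplex ℝ S,
      l1 (Pm h s a μ) (Pm h s a μ') ≤ L_T * l1 μ μ')
    (hclose : ∀ h, h < H → ∀ s, l1 (π h s) (π' h s) ≤ 2 * εb)
    (hεb1 : 2 * H * (H + 1) * ((1 + L_T) ^ H - 1) * εb ≤ ε₀)
    (hm1 : dCond H Pc Pm μ₁ π πt ≤ ε₀)
    (hm2 : dCond H Pm Pc μ₁ π πt ≤ ε₀)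
    (hm3 : dCond H Pm Pc' μ₁ π' πt ≤ ε₀) :
    expF H Pc μ₁ π πt (fun h s a =>
      l1 (Pc h s a (dens Pc μ₁ π h)) (Pc' h s a (dens Pc' μ₁ π' h))) ≤ ((H:ℝ) + 3) * ε₀ := by
  have h1LT : (1:ℝ) ≤ 1 + L_T := by linarith
  set X : ℝ := (1 + L_T) ^ H - 1 with hXdef
  have hX0 : 0 ≤ X := by
    have : (1:ℝ) = 1 ^ H := (one_pow H).symm
    have h2 : (1:ℝ) ^ H ≤ (1 + L_T) ^ H := pow_le_pow_left₀ (by norm_num) h1LT H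
    simp only [hXdef]; rw [one_pow] at h2; linarith
  set D : ℝ := 2 * εb * X with hDdef
  have hD0 : 0 ≤ D := by positivity
  have hδ := delta_bound (π2 := π') hμ hKm hπ hπ' hLT (by linarith) hlip hclose
  have hLTδ : ∀ h, h ≤ H → L_T * l1 (dens Pm μ₁ π h) (dens Pm μ₁ π' h) ≤ D := by
    intro h hh
    have e : (∑ k ∈ Finset.range h, (1 + L_T) ^ k) * L_T = (1 + L_T) ^ h - 1 := by
      have := geom_sum_mul (1 + L_T) h
      simpa using this
    have hpow : (1 + L_T) ^ h ≤ (1 + L_T) ^ H := pow_le_pow_right₀ h1LT hh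
    calc L_T * l1 (dens Pm μ₁ π h) (dens Pm μ₁ π' h)
        ≤ L_T * (2 * εb * ∑ k ∈ Finset.range h, (1 + L_T) ^ k) :=
          mul_le_mul_of_nonneg_left (hδ h hh) hLT.le
      _ = 2 * εb * ((∑ k ∈ Finset.range h, (1 + L_T) ^ k) * L_T) := by ring
      _ = 2 * εb * ((1 + L_T) ^ h - 1) := by rw [e]
      _ ≤ D := by rw [hDdef, hXdef]; nlinarith
  have hB : ∀ h, h < H → ∀ s a,
      l1 (Pm h s a (dens Pm μ₁ π h)) (Pm h s a (dens Pm μ₁ π' h)) ≤ D := by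
    intro h hh s a
    exact (hlip h hh s a _ (dens_simplex hμ hKm hπ h hh.le) _
      (dens_simplex hμ hKm hπ' h hh.le)).trans (hLTδ h hh.le)
  have hνρ : ∀ h, h ≤ H → l1 (densF Pc μ₁ π πt h) (densF Pm μ₁ π πt h) ≤ ε₀ := by
    intro h hh
    rw [l1_comm']
    exact (dCond_partial_le hμ hKm hKc hπ hπt h hh).trans hm2
  have hρρ' : ∀ h, h ≤ H → l1 (densF Pm μ₁ π πt h) (densF Pm μ₁ π' πt h) ≤ (H:ℝ) * D := by
    intro h hh
    refine (densF_diff_le hμ hKm hKm hπ hπ' hπt h hh).trans ?_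
    calc ∑ k ∈ Finset.range h, ∑ s, ∑ a, densF Pm μ₁ π πt k s * πt k s a *
          l1 (Pm k s a (dens Pm μ₁ π k)) (Pm k s a (dens Pm μ₁ π' k))
        ≤ ∑ k ∈ Finset.range h, D := by
          refine Finset.sum_le_sum fun k hk => ?_
          have hkH : k < H := lt_of_lt_of_le (Finset.mem_range.1 hk) hh
          exact exp_term_le _ _ _ _
            (fun s => (densF_simplex hμ hKm hπ hπt k hkH.le).1 s)
            (densF_simplex hμ hKm hπ hπt k hkH.le).2
            (fun s => hπt k s) (fun s a => hB k hkH s a)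
      _ = (h:ℝ) * D := by rw [Finset.sum_const, Finset.card_range, nsmul_eq_mul]
      _ ≤ (H:ℝ) * D := mul_le_mul_of_nonneg_right (Nat.cast_le.2 hh) hD0
  -- per-step bound
  have per : ∀ h ∈ Finset.range H,
      (∑ s, ∑ a, densF Pc μ₁ π πt h s * πt h s a *
        l1 (Pc h s a (dens Pc μ₁ π h)) (Pc' h s a (dens Pc' μ₁ π' h)))
      ≤ (∑ s, ∑ a, densF Pc μ₁ π πt h s * πt h s a *
          l1 (Pc h s a (dens Pc μ₁ π h)) (Pm h s a (dens Pm μ₁ π h)))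
        + (∑ s, ∑ a, densF Pm μ₁ π' πt h s * πt h s a *
          l1 (Pm h s a (dens Pm μ₁ π' h)) (Pc' h s a (dens Pc' μ₁ π' h)))
        + (D + (ε₀ + (H:ℝ) * D)) := by
    intro h hmem
    have hh : h < H := Finset.mem_range.1 hmem
    have hνs := densF_simplex hμ hKc hπ hπt h hh.le
    have hρ's := densF_simplex hμ hKm hπ' hπt h hh.le
    have hsplit : ∑ s, ∑ a, densF Pc μ₁ π πt h s * πt h s a *
        l1 (Pc h s a (dens Pc μ₁ π h)) (Pc' h s a (dens Pc' μ₁ π' h))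
        ≤ (∑ s, ∑ a, densF Pc μ₁ π πt h s * πt h s a *
            l1 (Pc h s a (dens Pc μ₁ π h)) (Pm h s a (dens Pm μ₁ π h)))
          + (∑ s, ∑ a, densF Pc μ₁ π πt h s * πt h s a *
            l1 (Pm h s a (dens Pm μ₁ π h)) (Pm h s a (dens Pm μ₁ π' h)))
          + (∑ s, ∑ a, densF Pc μ₁ π πt h s * πt h s a *
            l1 (Pm h s a (dens Pm μ₁ π' h)) (Pc' h s a (dens Pc' μ₁ π' h))) := by
      rw [← Finset.sum_add_distrib, ← Finset.sum_add_distrib]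
      refine Finset.sum_le_sum fun s _ => ?_
      rw [← Finset.sum_add_distrib, ← Finset.sum_add_distrib]
      refine Finset.sum_le_sum fun a _ => ?_
      have tri : l1 (Pc h s a (dens Pc μ₁ π h)) (Pc' h s a (dens Pc' μ₁ π' h))
          ≤ l1 (Pc h s a (dens Pc μ₁ π h)) (Pm h s a (dens Pm μ₁ π h))
            + l1 (Pm h s a (dens Pm μ₁ π h)) (Pm h s a (dens Pm μ₁ π' h))
            + l1 (Pm h s a (dens Pm μ₁ π' h)) (Pc' h s a (dens Pc' μ₁ π' h)) := by
        have t1 := l1_triangle' (Pc h s a (dens Pc μ₁ π h))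
          (Pm h s a (dens Pm μ₁ π h)) (Pc' h s a (dens Pc' μ₁ π' h))
        have t2 := l1_triangle' (Pm h s a (dens Pm μ₁ π h))
          (Pm h s a (dens Pm μ₁ π' h)) (Pc' h s a (dens Pc' μ₁ π' h))
        linarith
      have hnn : 0 ≤ densF Pc μ₁ π πt h s * πt h s a :=
        mul_nonneg (hνs.1 s) ((hπt h s).1 a)
      nlinarith [tri, hnn]
    have hBterm : ∑ s, ∑ a, densF Pc μ₁ π πt h s * πt h s a *
        l1 (Pm h s a (dens Pm μ₁ π h)) (Pm h s a (dens Pm μ₁ π' h)) ≤ D :=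
      exp_term_le _ _ _ _ (fun s => hνs.1 s) hνs.2 (fun s => hπt h s)
        (fun s a => hB h hh s a)
    have hCterm : ∑ s, ∑ a, densF Pc μ₁ π πt h s * πt h s a *
        l1 (Pm h s a (dens Pm μ₁ π' h)) (Pc' h s a (dens Pc' μ₁ π' h))
        ≤ (∑ s, ∑ a, densF Pm μ₁ π' πt h s * πt h s a *
            l1 (Pm h s a (dens Pm μ₁ π' h)) (Pc' h s a (dens Pc' μ₁ π' h)))
          + (ε₀ + (H:ℝ) * D) := by
      have hchg := exp_change (densF Pc μ₁ π πt h) (densF Pm μ₁ π' πt h) (πt h)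
        (fun s a => l1 (Pm h s a (dens Pm μ₁ π' h)) (Pc' h s a (dens Pc' μ₁ π' h)))
        (fun s => hνs.1 s) hνs.2 (fun s => hρ's.1 s) hρ's.2 (fun s => hπt h s)
        (fun s a => l1_nonneg' _ _)
        (fun s a => l1_le_two' (hKm h hh s a _ (dens_simplex hμ hKm hπ' h hh.le))
          (hKc' h hh s a _ (dens_simplex hμ hKc' hπ' h hh.le)))
      have hmeas : l1 (densF Pc μ₁ π πt h) (densF Pm μ₁ π' πt h) ≤ ε₀ + (H:ℝ) * D := by
        calc l1 (densF Pc μ₁ π πt h) (densF Pm μ₁ π' πt h)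
            ≤ l1 (densF Pc μ₁ π πt h) (densF Pm μ₁ π πt h)
              + l1 (densF Pm μ₁ π πt h) (densF Pm μ₁ π' πt h) := l1_triangle' _ _ _
          _ ≤ ε₀ + (H:ℝ) * D := add_le_add (hνρ h hh.le) (hρρ' h hh.le)
      linarith
    linarith
  -- sum over steps
  have main : expF H Pc μ₁ π πt (fun h s a =>
      l1 (Pc h s a (dens Pc μ₁ π h)) (Pc' h s a (dens Pc' μ₁ π' h)))
      ≤ dCond H Pc Pm μ₁ π πt + dCond H Pm Pc' μ₁ π' πt
        + (H:ℝ) * (D + (ε₀ + (H:ℝ) * D)) := by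
    have := Finset.sum_le_sum per
    have e : ∑ h ∈ Finset.range H,
        ((∑ s, ∑ a, densF Pc μ₁ π πt h s * πt h s a *
          l1 (Pc h s a (dens Pc μ₁ π h)) (Pm h s a (dens Pm μ₁ π h)))
        + (∑ s, ∑ a, densF Pm μ₁ π' πt h s * πt h s a *
          l1 (Pm h s a (dens Pm μ₁ π' h)) (Pc' h s a (dens Pc' μ₁ π' h)))
        + (D + (ε₀ + (H:ℝ) * D)))
        = dCond H Pc Pm μ₁ π πt + dCond H Pm Pc' μ₁ π' πt
          + (H:ℝ) * (D + (ε₀ + (H:ℝ) * D)) := by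
      rw [Finset.sum_add_distrib, Finset.sum_add_distrib, Finset.sum_const,
        Finset.card_range, nsmul_eq_mul]
      rfl
    rw [e] at this
    exact this
  have hfin : (H:ℝ) * (D + (ε₀ + (H:ℝ) * D)) ≤ (H:ℝ) * ε₀ + ε₀ := by
    have : (H:ℝ) * D + (H:ℝ) * ((H:ℝ) * D) = 2 * H * (H + 1) * X * εb - 0 := by
      rw [hDdef]; ring
    nlinarith [hεb1]
  calc expF H Pc μ₁ π πt (fun h s a =>
      l1 (Pc h s a (dens Pc μ₁ π h)) (Pc' h s a (dens Pc' μ₁ π' h)))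
      ≤ dCond H Pc Pm μ₁ π πt + dCond H Pm Pc' μ₁ π' πt
        + (H:ℝ) * (D + (ε₀ + (H:ℝ) * D)) := main
    _ ≤ ε₀ + ε₀ + ((H:ℝ) * ε₀ + ε₀) := by linarith [hm1, hm3, hfin]
    _ = ((H:ℝ) + 3) * ε₀ := by ring

lemma key_rew {Pc Pm Pc' : ℕ → S → A → (S → ℝ) → S → ℝ} {π' : ℕ → S → A → ℝ}
    {L_T εb ε₀ : ℝ}
    (hμ : μ₁ ∈ stdSimplex ℝ S)
    (hKc : IsKernel H Pc) (hKm : IsKernel H Pm) (hKc' : IsKernel H Pc')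
    (hπ : IsPolicy π) (hπ' : IsPolicy π')
    (hLT : 0 < L_T) (hεb : 0 < εb) (hε₀ : 0 < ε₀)
    (hlip : ∀ h, h < H → ∀ s a, ∀ μ ∈ stdSimplex ℝ S, ∀ μ' ∈ stdSimplex ℝ S,
      l1 (Pm h s a μ) (Pm h s a μ') ≤ L_T * l1 μ μ')
    (hclose : ∀ h, h < H → ∀ s, l1 (π h s) (π' h s) ≤ 2 * εb)
    (hεb1 : 2 * H * (H + 1) * ((1 + L_T) ^ H - 1) * εb ≤ ε₀)
    (hεb2 : 2 * H * εb ≤ ε₀)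
    (hm2 : dCond H Pm Pc μ₁ π π ≤ ε₀)
    (hm3 : dCond H Pm Pc' μ₁ π' π' ≤ ε₀) :
    ∀ h, h ≤ H → l1 (dens Pc μ₁ π h) (dens Pc' μ₁ π' h) ≤ 4 * ε₀ := by
  have h1LT : (1:ℝ) ≤ 1 + L_T := by linarith
  set X : ℝ := (1 + L_T) ^ H - 1 with hXdef
  have hX0 : 0 ≤ X := by
    have h2 : (1:ℝ) ^ H ≤ (1 + L_T) ^ H := pow_le_pow_left₀ (by norm_num) h1LT H
    simp only [hXdef]; rw [one_pow] at h2; linarith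
  have hδ := delta_bound (π2 := π') hμ hKm hπ hπ' hLT (by linarith) hlip hclose
  have hδ2 : ∀ h, h ≤ H → l1 (dens Pm μ₁ π h) (dens Pm μ₁ π' h) ≤ 2 * ε₀ := by
    intro h hh
    have hG : (∑ k ∈ Finset.range h, (1 + L_T) ^ k) ≤ (H:ℝ) * (1 + X) := by
      calc (∑ k ∈ Finset.range h, (1 + L_T) ^ k)
          ≤ ∑ k ∈ Finset.range h, (1 + L_T) ^ H := by
            refine Finset.sum_le_sum fun k hk => ?_
            exact pow_le_pow_right₀ h1LT (le_of_lt (lt_of_lt_of_le (Finset.mem_range.1 hk) hh))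
        _ = (h:ℝ) * (1 + L_T) ^ H := by
            rw [Finset.sum_const, Finset.card_range, nsmul_eq_mul]
        _ ≤ (H:ℝ) * (1 + L_T) ^ H := by
            have : (0:ℝ) ≤ (1 + L_T) ^ H := by positivity
            exact mul_le_mul_of_nonneg_right (Nat.cast_le.2 hh) this
        _ = (H:ℝ) * (1 + X) := by rw [hXdef]; ring
    have hcH : (0:ℝ) ≤ (H:ℝ) := Nat.cast_nonneg H
    have hHX : 2 * (H:ℝ) * X * εb ≤ ε₀ := by nlinarith [hεb1]
    calc l1 (dens Pm μ₁ π h) (dens Pm μ₁ π' h)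
        ≤ 2 * εb * ∑ k ∈ Finset.range h, (1 + L_T) ^ k := hδ h hh
      _ ≤ 2 * εb * ((H:ℝ) * (1 + X)) := by
          exact mul_le_mul_of_nonneg_left hG (by positivity)
      _ = 2 * (H:ℝ) * εb + 2 * (H:ℝ) * X * εb := by ring
      _ ≤ 2 * ε₀ := by linarith [hεb2, hHX]
  intro h hh
  have p1 : l1 (dens Pc μ₁ π h) (dens Pm μ₁ π h) ≤ ε₀ := by
    rw [dens_eq_densF (P := Pc) (π := π), dens_eq_densF (P := Pm) (π := π), l1_comm']
    exact (dCond_partial_le hμ hKm hKc hπ hπ h hh).trans hm2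
  have p3 : l1 (dens Pm μ₁ π' h) (dens Pc' μ₁ π' h) ≤ ε₀ := by
    rw [dens_eq_densF (P := Pm) (π := π'), dens_eq_densF (P := Pc') (π := π')]
    exact (dCond_partial_le hμ hKm hKc' hπ' hπ' h hh).trans hm3
  have t1 := l1_triangle' (dens Pc μ₁ π h) (dens Pm μ₁ π h) (dens Pc' μ₁ π' h)
  have t2 := l1_triangle' (dens Pm μ₁ π h) (dens Pm μ₁ π' h) (dens Pc' μ₁ π' h)
  linarith [hδ2 h hh]

lemma dInf_le_of {π π' : ℕ → S → A → ℝ} {c : ℝ} (hc : 0 ≤ c)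
    (hb : ∀ h, h < H → ∀ s : S, l1 (π h s) (π' h s) ≤ c) : dInf H π π' ≤ c := by
  refine Real.sSup_le ?_ hc
  rintro x ⟨h, hh, s, rfl⟩
  exact hb h hh s

lemma le_dInf {π π' : ℕ → S → A → ℝ} (hπ : IsPolicy π) (hπ' : IsPolicy π')
    {h : ℕ} (hh : h < H) (s : S) : l1 (π h s) (π' h s) ≤ dInf H π π' := by
  refine le_csSup ⟨2, ?_⟩ ⟨h, hh, s, rfl⟩
  rintro x ⟨k, hk, t, rfl⟩
  exact l1_le_two' ⟨(hπ k t).1, (hπ k t).2⟩ ⟨(hπ' k t).1, (hπ' k t).2⟩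

lemma inter_nonempty {ι : Type*} [Fintype ι] (Aset Bset : Set ι)
    (hA : Fintype.card ι < 2 * Aset.ncard) (hB : Fintype.card ι < 2 * Bset.ncard) :
    (Aset ∩ Bset).Nonempty := by
  rw [Set.nonempty_iff_ne_empty]
  intro hemp
  have h1 : (Aset ∪ Bset).ncard + (Aset ∩ Bset).ncard = Aset.ncard + Bset.ncard :=
    Set.ncard_union_add_ncard_inter _ _ (Set.toFinite _) (Set.toFinite _)
  have h2 : (Aset ∪ Bset).ncard ≤ Fintype.card ι := by
    have := Set.ncard_le_ncard (Set.subset_univ (Aset ∪ Bset)) Set.finite_univ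
    rwa [Set.ncard_univ, Nat.card_eq_fintype_card] at this
  rw [hemp, Set.ncard_empty] at h1
  omega

end MFHelpers

/-- **Bridge model construction: well-definedness and approximation error.**
Under the global Lipschitz conditions, if for every policy the central model has strictly
more than half of the models in its `ε₀`-neighborhood, then the bridge model built by
`w_π`-weighted interpolation over an `ε̄`-cover is well defined, and for every reference
policy `π` its transitions and rewards are `(H+3)ε₀`- resp. `L_r·H·(H+4)ε₀`-close to those of
the central model of `π`, uniformly over roll-out policies. -/
theorem bridge_model_construction {S A ι : Type*} [Fintype S] [Fintype A] [Fintype ι]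
    [Nonempty ι] (H : ℕ)
    (P : ι → ℕ → S → A → (S → ℝ) → S → ℝ) (r : ℕ → S → A → (S → ℝ) → ℝ)
    (μ₁ : S → ℝ) (hμ₁ : μ₁ ∈ stdSimplex ℝ S)
    (hPker : ∀ m, IsKernel H (P m))
    (L_T L_r : ℝ) (hLT : 0 < L_T) (hLr : 0 < L_r)
    -- global Lipschitz continuity of transitions and rewards in the density
    (hPlip : ∀ m, ∀ h, h < H → ∀ s a, ∀ μ ∈ stdSimplex ℝ S, ∀ μ' ∈ stdSimplex ℝ S,
      l1 (P m h s a μ) (P m h s a μ') ≤ L_T * l1 μ μ')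
    (hrbd : ∀ h, h < H → ∀ s a (μ : S → ℝ), μ ∈ stdSimplex ℝ S →
      r h s a μ ∈ Set.Icc (0 : ℝ) (1 / (H : ℝ)))
    (hrlip : ∀ h, h < H → ∀ s a, ∀ μ ∈ stdSimplex ℝ S, ∀ μ' ∈ stdSimplex ℝ S,
      |r h s a μ - r h s a μ'| ≤ L_r * l1 μ μ')
    (ε₀ : ℝ) (hε₀ : 0 < ε₀)
    -- a fixed central model for each policy
    (MCtr : (ℕ → S → A → ℝ) → ι)
    (hCtrMax : ∀ π, IsPolicy π → ∀ m : ι,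
      (nbhd H P μ₁ ε₀ π m).ncard ≤ (nbhd H P μ₁ ε₀ π (MCtr π)).ncard)
    -- every central model has strictly more than half of the models as neighbors
    (hHalf : ∀ π, IsPolicy π →
      Fintype.card ι < 2 * (nbhd H P μ₁ ε₀ π (MCtr π)).ncard)
    -- the resolution ε̄ of the policy cover
    (εb : ℝ) (hεb : 0 < εb)
    (hεb1 : 2 * H * (H + 1) * ((1 + L_T) ^ H - 1) * εb ≤ ε₀)
    (hεb2 : 2 * H * εb ≤ ε₀)
    -- a finite ε̄-cover of the policy space w.r.t. d_{∞,1}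
    (Pcov : Finset (ℕ → S → A → ℝ)) (hPcovpol : ∀ πt ∈ Pcov, IsPolicy πt)
    (hcover : ∀ π : ℕ → S → A → ℝ, IsPolicy π →
      ∃ πt ∈ Pcov, ∀ h, h < H → ∀ s, l1 (π h s) (πt h s) ≤ εb)
    -- the bridge model
    (PBr : ℕ → S → A → (ℕ → S → A → ℝ) → S → ℝ)
    (rBr : ℕ → S → A → (ℕ → S → A → ℝ) → ℝ)
    (hPBr : ∀ h s a π s', PBr h s a π s' =
      (∑ πt ∈ Pcov, max (2 * εb - dInf H π πt) 0 *
          P (MCtr πt) h s a (dens (P (MCtr πt)) μ₁ πt h) s') /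
        ∑ πt ∈ Pcov, max (2 * εb - dInf H π πt) 0)
    (hrBr : ∀ h s a π, rBr h s a π =
      (∑ πt ∈ Pcov, max (2 * εb - dInf H π πt) 0 *
          r h s a (dens (P (MCtr πt)) μ₁ πt h)) /
        ∑ πt ∈ Pcov, max (2 * εb - dInf H π πt) 0) :
    -- the bridge model is well defined: the denominator is strictly positive
    (∀ π : ℕ → S → A → ℝ, IsPolicy π →
      0 < ∑ πt ∈ Pcov, max (2 * εb - dInf H π πt) 0) ∧
    -- transition approximation error of the bridge model against each central model
    (∀ π : ℕ → S → A → ℝ, IsPolicy π → ∀ πt, IsPolicy πt →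
      expF H (P (MCtr π)) μ₁ π πt (fun h s a =>
          l1 (P (MCtr π) h s a (dens (P (MCtr π)) μ₁ π h)) (PBr h s a π))
        ≤ (H + 3) * ε₀) ∧
    -- reward approximation error of the bridge model against each central model
    (∀ π : ℕ → S → A → ℝ, IsPolicy π → ∀ πt, IsPolicy πt →
      expF H (P (MCtr π)) μ₁ π πt (fun h s a =>
          |r h s a (dens (P (MCtr π)) μ₁ π h) - rBr h s a π|)
        ≤ L_r * H * (H + 4) * ε₀) := by
  classical
  -- well-definedness
  have hWpos : ∀ π : ℕ → S → A → ℝ, IsPolicy π →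
      0 < ∑ πt ∈ Pcov, max (2 * εb - dInf H π πt) 0 := by
    intro π hπ
    obtain ⟨π0, hπ0mem, hπ0⟩ := hcover π hπ
    have hd : dInf H π π0 ≤ εb := dInf_le_of hεb.le hπ0
    refine Finset.sum_pos' (fun i _ => le_max_right _ _) ⟨π0, hπ0mem, ?_⟩
    have h1 : εb ≤ 2 * εb - dInf H π π0 := by linarith
    exact lt_of_lt_of_le hεb (h1.trans (le_max_left _ _))
  have hclose_of : ∀ (π πc : ℕ → S → A → ℝ), IsPolicy π → IsPolicy πc →
      0 < max (2 * εb - dInf H π πc) 0 → ∀ h, h < H → ∀ s,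
      l1 (π h s) (πc h s) ≤ 2 * εb := by
    intro π πc hπ hπc hw h hh s
    have hdlt : dInf H π πc < 2 * εb := by
      by_contra hge
      push_neg at hge
      rw [max_eq_right (by linarith)] at hw
      exact lt_irrefl _ hw
    exact (le_dInf hπ hπc hh s).trans hdlt.le
  have hmex : ∀ (π πc : ℕ → S → A → ℝ), IsPolicy π → IsPolicy πc →
      ∃ m, (∀ pt, IsPolicy pt →
          dCond H (P (MCtr π)) (P m) μ₁ π pt ≤ ε₀ ∧
          dCond H (P m) (P (MCtr π)) μ₁ π pt ≤ ε₀) ∧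
        (∀ pt, IsPolicy pt →
          dCond H (P (MCtr πc)) (P m) μ₁ πc pt ≤ ε₀ ∧
          dCond H (P m) (P (MCtr πc)) μ₁ πc pt ≤ ε₀) := by
    intro π πc hπ hπc
    obtain ⟨m, hm⟩ := inter_nonempty (nbhd H P μ₁ ε₀ π (MCtr π))
      (nbhd H P μ₁ ε₀ πc (MCtr πc)) (hHalf π hπ) (hHalf πc hπc)
    exact ⟨m, hm.1, hm.2⟩
  refine ⟨hWpos, ?_, ?_⟩
  · -- transitions
    intro π hπ πt hπt
    set W : ℝ := ∑ pc ∈ Pcov, max (2 * εb - dInf H π pc) 0 with hWdef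
    have hW : 0 < W := hWpos π hπ
    have hpbr : ∀ h s a, l1 (P (MCtr π) h s a (dens (P (MCtr π)) μ₁ π h)) (PBr h s a π)
        ≤ ∑ pc ∈ Pcov, max (2 * εb - dInf H π pc) 0 / W *
            l1 (P (MCtr π) h s a (dens (P (MCtr π)) μ₁ π h))
              (P (MCtr pc) h s a (dens (P (MCtr pc)) μ₁ pc h)) := by
      intro h s a
      have hfn : PBr h s a π = fun s' =>
          (∑ pc ∈ Pcov, max (2 * εb - dInf H π pc) 0 *
            P (MCtr pc) h s a (dens (P (MCtr pc)) μ₁ pc h) s') / W :=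
        funext fun s' => hPBr h s a π s'
      rw [hfn]
      exact l1_convex Pcov _ (fun i _ => le_max_right _ _) hW _ _
    have hsw := exp_swap Pcov H (densF (P (MCtr π)) μ₁ π πt) πt
      (fun pc => max (2 * εb - dInf H π pc) 0 / W)
      (fun pc h s a => l1 (P (MCtr π) h s a (dens (P (MCtr π)) μ₁ π h))
        (P (MCtr pc) h s a (dens (P (MCtr pc)) μ₁ pc h)))
    calc expF H (P (MCtr π)) μ₁ π πt (fun h s a =>
          l1 (P (MCtr π) h s a (dens (P (MCtr π)) μ₁ π h)) (PBr h s a π))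
        ≤ ∑ h ∈ Finset.range H, ∑ s, ∑ a, densF (P (MCtr π)) μ₁ π πt h s * πt h s a *
            (∑ pc ∈ Pcov, max (2 * εb - dInf H π pc) 0 / W *
              l1 (P (MCtr π) h s a (dens (P (MCtr π)) μ₁ π h))
                (P (MCtr pc) h s a (dens (P (MCtr pc)) μ₁ pc h))) := by
          refine Finset.sum_le_sum fun h hmem => ?_
          have hh : h < H := Finset.mem_range.1 hmem
          have hνs := densF_simplex hμ₁ (hPker (MCtr π)) hπ hπt h hh.le
          refine Finset.sum_le_sum fun s _ => Finset.sum_le_sum fun a _ => ?_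
          exact mul_le_mul_of_nonneg_left (hpbr h s a)
            (mul_nonneg (hνs.1 s) ((hπt h s).1 a))
      _ = ∑ pc ∈ Pcov, max (2 * εb - dInf H π pc) 0 / W *
            expF H (P (MCtr π)) μ₁ π πt (fun h s a =>
              l1 (P (MCtr π) h s a (dens (P (MCtr π)) μ₁ π h))
                (P (MCtr pc) h s a (dens (P (MCtr pc)) μ₁ pc h))) := hsw
      _ ≤ ∑ pc ∈ Pcov, max (2 * εb - dInf H π pc) 0 / W * (((H:ℝ) + 3) * ε₀) := by
          refine Finset.sum_le_sum fun pc hpc => ?_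
          have hπc : IsPolicy pc := hPcovpol pc hpc
          rcases eq_or_lt_of_le (le_max_right (2 * εb - dInf H π pc) 0) with hw0 | hwpos
          · rw [← hw0]
            simp
          · refine mul_le_mul_of_nonneg_left ?_
              (div_nonneg (le_max_right _ _) hW.le)
            obtain ⟨m, hmA, hmB⟩ := hmex π pc hπ hπc
            exact key_trans hμ₁ (hPker (MCtr π)) (hPker m) (hPker (MCtr pc))
              hπ hπc hπt hLT hεb hε₀ (hPlip m)
              (hclose_of π pc hπ hπc hwpos) hεb1
              (hmA πt hπt).1 (hmA πt hπt).2 (hmB πt hπt).2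
      _ = (((H:ℝ)) + 3) * ε₀ := by
          rw [← Finset.sum_mul, ← Finset.sum_div, ← hWdef, div_self hW.ne', one_mul]
  · -- rewards
    intro π hπ πt hπt
    set W : ℝ := ∑ pc ∈ Pcov, max (2 * εb - dInf H π pc) 0 with hWdef
    have hW : 0 < W := hWpos π hπ
    have hpbr : ∀ h s a, |r h s a (dens (P (MCtr π)) μ₁ π h) - rBr h s a π|
        ≤ ∑ pc ∈ Pcov, max (2 * εb - dInf H π pc) 0 / W *
            |r h s a (dens (P (MCtr π)) μ₁ π h) -
              r h s a (dens (P (MCtr pc)) μ₁ pc h)| := by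
      intro h s a
      rw [hrBr h s a π]
      exact abs_convex Pcov _ (fun i _ => le_max_right _ _) hW _ _
    have hsw := exp_swap Pcov H (densF (P (MCtr π)) μ₁ π πt) πt
      (fun pc => max (2 * εb - dInf H π pc) 0 / W)
      (fun pc h s a => |r h s a (dens (P (MCtr π)) μ₁ π h) -
        r h s a (dens (P (MCtr pc)) μ₁ pc h)|)
    calc expF H (P (MCtr π)) μ₁ π πt (fun h s a =>
          |r h s a (dens (P (MCtr π)) μ₁ π h) - rBr h s a π|)
        ≤ ∑ h ∈ Finset.range H, ∑ s, ∑ a, densF (P (MCtr π)) μ₁ π πt h s * πt h s a *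
            (∑ pc ∈ Pcov, max (2 * εb - dInf H π pc) 0 / W *
              |r h s a (dens (P (MCtr π)) μ₁ π h) -
                r h s a (dens (P (MCtr pc)) μ₁ pc h)|) := by
          refine Finset.sum_le_sum fun h hmem => ?_
          have hh : h < H := Finset.mem_range.1 hmem
          have hνs := densF_simplex hμ₁ (hPker (MCtr π)) hπ hπt h hh.le
          refine Finset.sum_le_sum fun s _ => Finset.sum_le_sum fun a _ => ?_
          exact mul_le_mul_of_nonneg_left (hpbr h s a)
            (mul_nonneg (hνs.1 s) ((hπt h s).1 a))
      _ = ∑ pc ∈ Pcov, max (2 * εb - dInf H π pc) 0 / W *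
            expF H (P (MCtr π)) μ₁ π πt (fun h s a =>
              |r h s a (dens (P (MCtr π)) μ₁ π h) -
                r h s a (dens (P (MCtr pc)) μ₁ pc h)|) := hsw
      _ ≤ ∑ pc ∈ Pcov, max (2 * εb - dInf H π pc) 0 / W * ((H:ℝ) * (L_r * (4 * ε₀))) := by
          refine Finset.sum_le_sum fun pc hpc => ?_
          have hπc : IsPolicy pc := hPcovpol pc hpc
          rcases eq_or_lt_of_le (le_max_right (2 * εb - dInf H π pc) 0) with hw0 | hwpos
          · rw [← hw0]
            simp
          · refine mul_le_mul_of_nonneg_left ?_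
              (div_nonneg (le_max_right _ _) hW.le)
            obtain ⟨m, hmA, hmB⟩ := hmex π pc hπ hπc
            have hdd := key_rew hμ₁ (hPker (MCtr π)) (hPker m) (hPker (MCtr pc))
              hπ hπc hLT hεb hε₀ (hPlip m)
              (hclose_of π pc hπ hπc hwpos) hεb1 hεb2
              (hmA π hπ).2 (hmB pc hπc).2
            have hbound : ∀ h, h < H → ∀ s a,
                |r h s a (dens (P (MCtr π)) μ₁ π h) -
                  r h s a (dens (P (MCtr pc)) μ₁ pc h)| ≤ L_r * (4 * ε₀) := by
              intro h hh s a
              have h1 := hrlip h hh s a _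
                (dens_simplex hμ₁ (hPker (MCtr π)) hπ h hh.le) _
                (dens_simplex hμ₁ (hPker (MCtr pc)) hπc h hh.le)
              have h2 := hdd h hh.le
              calc |r h s a (dens (P (MCtr π)) μ₁ π h) -
                  r h s a (dens (P (MCtr pc)) μ₁ pc h)|
                  ≤ L_r * l1 (dens (P (MCtr π)) μ₁ π h) (dens (P (MCtr pc)) μ₁ pc h) := h1
                _ ≤ L_r * (4 * ε₀) := mul_le_mul_of_nonneg_left h2 hLr.le
            calc expF H (P (MCtr π)) μ₁ π πt (fun h s a =>
                |r h s a (dens (P (MCtr π)) μ₁ π h) -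
                  r h s a (dens (P (MCtr pc)) μ₁ pc h)|)
                ≤ ∑ h ∈ Finset.range H, L_r * (4 * ε₀) := by
                  refine Finset.sum_le_sum fun h hmem => ?_
                  have hh : h < H := Finset.mem_range.1 hmem
                  have hνs := densF_simplex hμ₁ (hPker (MCtr π)) hπ hπt h hh.le
                  exact exp_term_le _ _ _ _ (fun s => hνs.1 s) hνs.2
                    (fun s => hπt h s) (fun s a => hbound h hh s a)
              _ = (H:ℝ) * (L_r * (4 * ε₀)) := by
                  rw [Finset.sum_const, Finset.card_range, nsmul_eq_mul]
      _ = (H:ℝ) * (L_r * (4 * ε₀)) := by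
          rw [← Finset.sum_mul, ← Finset.sum_div, ← hWdef, div_self hW.ne', one_mul]
      _ ≤ L_r * H * (H + 4) * ε₀ := by
          have hH0 : (0:ℝ) ≤ (H:ℝ) := Nat.cast_nonneg H
          nlinarith [mul_nonneg (mul_nonneg (mul_nonneg hLr.le hH0) hH0) hε₀.le]
end

section
/- Let X be a finite set, let p be a probability distribution on X, and let X₁,…,X_N be independent samples from p. Let p̂ be the empirical distribution, p̂(x) := (1/N)·|{n ∈ {1,…,N} : X_n = x}|. For any ε ∈ (0,1) and δ ∈ (0,1), if N ≥ max{8|X|/ε², (8/ε²)·log(2/δ)}, then Pr(‖p − p̂‖₁ ≥ ε) ≤ δ. (Concentration of the empirical distribution in ℓ1 distance.) -/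
open MeasureTheory ProbabilityTheory
open scoped Classical

lemma hoeff_core (q : ℝ) (h0 : 0 ≤ q) (h1 : q ≤ 1) (t : ℝ) :
    1 - q + q * Real.exp t ≤ Real.exp (t * q + t ^ 2 / 8) := by
  -- positivity of the denominator
  have hd : ∀ s : ℝ, 0 < 1 - q + q * Real.exp s := by
    intro s
    rcases le_total (Real.exp s) 1 with h | h
    · nlinarith [Real.exp_pos s, mul_nonneg (sub_nonneg.2 h1) (sub_nonneg.2 h)]
    · nlinarith [mul_nonneg h0 (sub_nonneg.2 h)]
  set φ : ℝ → ℝ := fun s => s * q + s ^ 2 / 8 - Real.log (1 - q + q * Real.exp s) with hφdef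
  set ψ : ℝ → ℝ := fun s => q + s / 4 - q * Real.exp s / (1 - q + q * Real.exp s) with hψdef
  have hd' : ∀ s : ℝ, HasDerivAt (fun u => 1 - q + q * Real.exp u) (q * Real.exp s) s :=
    fun s => ((Real.hasDerivAt_exp s).const_mul q).const_add (1 - q)
  have hφ' : ∀ s : ℝ, HasDerivAt φ (ψ s) s := by
    intro s
    have h1' : HasDerivAt (fun u : ℝ => u * q) q s := by
      simpa using (hasDerivAt_id s).mul_const q
    have h2' : HasDerivAt (fun u : ℝ => u ^ 2 / 8) (2 * s / 8) s := by
      simpa using (hasDerivAt_pow 2 s).div_const 8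
    have h3' : HasDerivAt (fun u : ℝ => Real.log (1 - q + q * Real.exp u))
        (q * Real.exp s / (1 - q + q * Real.exp s)) s := (hd' s).log (hd s).ne'
    have := (h1'.add h2').sub h3'
    refine this.congr_deriv ?_
    rw [hψdef]; ring
  have hψ' : ∀ s : ℝ, HasDerivAt ψ
      (1 / 4 - (q * Real.exp s * (1 - q + q * Real.exp s) -
        q * Real.exp s * (q * Real.exp s)) / (1 - q + q * Real.exp s) ^ 2) s := by
    intro s
    have h1' : HasDerivAt (fun u : ℝ => q + u / 4) (1 / 4) s := by
      simpa using ((hasDerivAt_id s).div_const 4).const_add q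
    have h2' : HasDerivAt (fun u : ℝ => q * Real.exp u / (1 - q + q * Real.exp u))
        ((q * Real.exp s * (1 - q + q * Real.exp s) -
          q * Real.exp s * (q * Real.exp s)) / (1 - q + q * Real.exp s) ^ 2) s :=
      ((Real.hasDerivAt_exp s).const_mul q).div (hd' s) (hd s).ne'
    exact h1'.sub h2'
  have hψmono : Monotone ψ := by
    apply monotone_of_deriv_nonneg (fun s => (hψ' s).differentiableAt)
    intro s
    rw [(hψ' s).deriv]
    have hds := hd s
    have he := Real.exp_pos s
    rw [sub_nonneg, div_le_iff₀ (by positivity)]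
    nlinarith [sq_nonneg (1 - q - q * Real.exp s), mul_nonneg h0 he.le,
      mul_nonneg (mul_nonneg h0 he.le) he.le]
  have hψ0 : ψ 0 = 0 := by
    simp [hψdef]
  have hφ0 : φ 0 = 0 := by
    simp [hφdef]
  have hφdiff : Differentiable ℝ φ := fun s => (hφ' s).differentiableAt
  have key : 0 ≤ φ t := by
    rcases le_total t 0 with ht | ht
    · have hanti : AntitoneOn φ (Set.Iic 0) := by
        apply antitoneOn_of_deriv_nonpos (convex_Iic 0) hφdiff.continuous.continuousOn
          hφdiff.differentiableOn
        intro x hx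
        rw [interior_Iic] at hx
        rw [(hφ' x).deriv]
        calc ψ x ≤ ψ 0 := hψmono hx.le
        _ = 0 := hψ0
      have := hanti (Set.mem_Iic.2 ht) (Set.mem_Iic.2 le_rfl) ht
      rw [hφ0] at this; linarith
    · have hmono : MonotoneOn φ (Set.Ici 0) := by
        apply monotoneOn_of_deriv_nonneg (convex_Ici 0) hφdiff.continuous.continuousOn
          hφdiff.differentiableOn
        intro x hx
        rw [interior_Ici] at hx
        rw [(hφ' x).deriv]
        calc (0:ℝ) = ψ 0 := hψ0.symm
        _ ≤ ψ x := hψmono hx.le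
      have := hmono (Set.mem_Ici.2 le_rfl) (Set.mem_Ici.2 ht) ht
      rw [hφ0] at this; linarith
  have hlog : Real.log (1 - q + q * Real.exp t) ≤ t * q + t ^ 2 / 8 := by
    have : φ t = t * q + t ^ 2 / 8 - Real.log (1 - q + q * Real.exp t) := rfl
    linarith [key, this ▸ key]
  calc 1 - q + q * Real.exp t = Real.exp (Real.log (1 - q + q * Real.exp t)) :=
        (Real.exp_log (hd t)).symm
  _ ≤ Real.exp (t * q + t ^ 2 / 8) := Real.exp_le_exp.2 hlog

lemma count_sum_eq {X : Type*} [Fintype X] {N : ℕ} (ξ : Fin N → X) (A : Finset X) :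
    ∑ x ∈ A, ((Finset.univ.filter fun n => ξ n = x).card : ℝ)
      = ∑ n : Fin N, (if ξ n ∈ A then (1 : ℝ) else 0) := by
  simp_rw [Finset.card_filter]
  push_cast
  rw [Finset.sum_comm]
  refine Finset.sum_congr rfl fun n _ => ?_
  simp [Finset.sum_ite_eq]

lemma chernoff_one_set {X : Type*} [Fintype X] [MeasurableSpace X] [MeasurableSingletonClass X]
    {Ω : Type*} [MeasureSpace Ω] [IsProbabilityMeasure (ℙ : Measure Ω)]
    (p : X → ℝ) (hp : p ∈ stdSimplex ℝ X)
    (N : ℕ) (hN0 : 0 < N) (ξ : Fin N → Ω → X) (hmeas : ∀ n, Measurable (ξ n))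
    (hindep : iIndepFun ξ ℙ)
    (hlaw : ∀ (n : Fin N) (x : X), ℙ {ω | ξ n ω = x} = ENNReal.ofReal (p x))
    (t : ℝ) (ht : 0 ≤ t) (A : Finset X) (s : ℝ) :
    ℙ {ω | s ≤ ∑ x ∈ A, (p x - ((Finset.univ.filter fun n => ξ n ω = x).card : ℝ) / (N : ℝ))}
      ≤ ENNReal.ofReal (Real.exp (-t * ((N : ℝ) * s) + (N : ℝ) * (t ^ 2 / 8))) := by
  set q : ℝ := ∑ x ∈ A, p x with hqdef
  have hq0 : 0 ≤ q := Finset.sum_nonneg fun x _ => hp.1 x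
  have hq1 : q ≤ 1 := by
    rw [← hp.2]
    exact Finset.sum_le_sum_of_subset_of_nonneg (Finset.subset_univ A)
      (fun x _ _ => hp.1 x)
  set g : X → ℝ := fun x => q - if x ∈ A then 1 else 0 with hgdef
  have hgmeas : Measurable g := measurable_of_countable g
  set Y : Fin N → Ω → ℝ := fun n => g ∘ ξ n with hYdef
  have hYmeas : ∀ n, Measurable (Y n) := fun n => hgmeas.comp (hmeas n)
  have hYindep : iIndepFun Y ℙ :=
    hindep.comp (fun _ => g) (fun _ => hgmeas)
  have hNpos : (0 : ℝ) < (N : ℝ) := by exact_mod_cast hN0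
  -- rewrite the event
  have hset : {ω | s ≤ ∑ x ∈ A,
      (p x - ((Finset.univ.filter fun n => ξ n ω = x).card : ℝ) / (N : ℝ))}
      = {ω | (N : ℝ) * s ≤ (∑ n, Y n) ω} := by
    ext ω
    have h1 : ∑ x ∈ A, (p x - ((Finset.univ.filter fun n => ξ n ω = x).card : ℝ) / (N : ℝ))
        = ((∑ n, Y n) ω) / (N : ℝ) := by
      rw [Finset.sum_sub_distrib, ← Finset.sum_div, count_sum_eq (fun n => ξ n ω) A]
      rw [Finset.sum_apply]
      simp only [hYdef, Function.comp_apply, hgdef]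
      rw [Finset.sum_sub_distrib, Finset.sum_const, Finset.card_univ, Fintype.card_fin]
      field_simp
      ring
    rw [Set.mem_setOf_eq, Set.mem_setOf_eq, h1, le_div_iff₀ hNpos, mul_comm]
  -- mgf computation for one summand
  have hmgf_eq : ∀ n, mgf (Y n) ℙ t = ∑ x, p x * Real.exp (t * g x) := by
    intro n
    have hpush : Measure.map (ξ n) ℙ = Measure.map (ξ n) ℙ := rfl
    haveI : IsProbabilityMeasure (Measure.map (ξ n) ℙ) :=
      Measure.isProbabilityMeasure_map (hmeas n).aemeasurable
    have hfm : AEStronglyMeasurable (fun x => Real.exp (t * g x)) (Measure.map (ξ n) ℙ) :=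
      (measurable_of_countable _).aestronglyMeasurable
    have h1 : mgf (Y n) ℙ t = ∫ x, Real.exp (t * g x) ∂(Measure.map (ξ n) ℙ) := by
      rw [mgf, integral_map (hmeas n).aemeasurable hfm]
      rfl
    rw [h1, integral_fintype (Integrable.of_finite)]
    refine Finset.sum_congr rfl fun x _ => ?_
    rw [Measure.real, Measure.map_apply (hmeas n) (measurableSet_singleton x)]
    have : ξ n ⁻¹' {x} = {ω | ξ n ω = x} := by ext ω; simp
    rw [this, hlaw n x, ENNReal.toReal_ofReal (hp.1 x), smul_eq_mul]
  have hmgf_le : ∀ n, mgf (Y n) ℙ t ≤ Real.exp (t ^ 2 / 8) := by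
    intro n
    rw [hmgf_eq n]
    have hsplit : ∑ x, p x * Real.exp (t * g x)
        = q * Real.exp (t * (q - 1)) + (1 - q) * Real.exp (t * q) := by
      rw [← Finset.sum_filter_add_sum_filter_not Finset.univ (· ∈ A)]
      have hA : Finset.univ.filter (· ∈ A) = A := by
        ext x; simp
      have hsum_not : ∑ x ∈ Finset.univ.filter (¬ · ∈ A), p x = 1 - q := by
        have := Finset.sum_filter_add_sum_filter_not Finset.univ (· ∈ A) p
        rw [hA, hp.2] at this
        linarith
      rw [hA]
      have e1 : ∑ x ∈ A, p x * Real.exp (t * g x) = q * Real.exp (t * (q - 1)) := by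
        rw [hqdef, Finset.sum_mul]
        refine Finset.sum_congr rfl fun x hx => ?_
        simp [hgdef, hx, hqdef]
      have e2 : ∑ x ∈ Finset.univ.filter (¬ · ∈ A), p x * Real.exp (t * g x)
          = (1 - q) * Real.exp (t * q) := by
        rw [← hsum_not, Finset.sum_mul]
        refine Finset.sum_congr rfl fun x hx => ?_
        simp only [Finset.mem_filter] at hx
        simp [hgdef, hx.2]
      rw [e1, e2]
    rw [hsplit]
    have hcore := hoeff_core q hq0 hq1 (-t)
    have hrw : q * Real.exp (t * (q - 1)) + (1 - q) * Real.exp (t * q)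
        = Real.exp (t * q) * (1 - q + q * Real.exp (-t)) := by
      rw [show t * (q - 1) = t * q + -t by ring, Real.exp_add]
      ring
    rw [hrw]
    calc Real.exp (t * q) * (1 - q + q * Real.exp (-t))
        ≤ Real.exp (t * q) * Real.exp (-t * q + (-t) ^ 2 / 8) := by
          exact mul_le_mul_of_nonneg_left hcore (Real.exp_pos _).le
      _ = Real.exp (t ^ 2 / 8) := by
          rw [← Real.exp_add]; congr 1; ring
  -- integrability
  have hint : ∀ n : Fin N, Integrable (fun ω => Real.exp (t * Y n ω)) ℙ := by
    intro n
    haveI : IsProbabilityMeasure (Measure.map (ξ n) ℙ) :=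
      Measure.isProbabilityMeasure_map (hmeas n).aemeasurable
    have hfm : AEStronglyMeasurable (fun x => Real.exp (t * g x)) (Measure.map (ξ n) ℙ) :=
      (measurable_of_countable _).aestronglyMeasurable
    have := (integrable_map_measure hfm (hmeas n).aemeasurable).mp Integrable.of_finite
    exact this
  have hsumint : Integrable (fun ω => Real.exp (t * (∑ n, Y n) ω)) ℙ :=
    hYindep.integrable_exp_mul_sum hYmeas (fun i _ => hint i)
  -- Chernoff
  have hch := measure_ge_le_exp_mul_mgf (X := ∑ n, Y n) (μ := ℙ) ((N : ℝ) * s) ht hsumint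
  have hprod : mgf (∑ n, Y n) ℙ t ≤ Real.exp ((N : ℝ) * (t ^ 2 / 8)) := by
    rw [hYindep.mgf_sum hYmeas Finset.univ]
    calc ∏ n : Fin N, mgf (Y n) ℙ t ≤ ∏ _n : Fin N, Real.exp (t ^ 2 / 8) :=
          Finset.prod_le_prod (fun i _ => mgf_nonneg) (fun i _ => hmgf_le i)
      _ = Real.exp ((N : ℝ) * (t ^ 2 / 8)) := by
          rw [Finset.prod_const, Finset.card_univ, Fintype.card_fin, ← Real.exp_nat_mul]
  rw [hset]
  have hmeasE : ℙ {ω | (N : ℝ) * s ≤ (∑ n, Y n) ω} ≠ ⊤ := measure_ne_top _ _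
  rw [← ENNReal.ofReal_toReal hmeasE]
  apply ENNReal.ofReal_le_ofReal
  calc (ℙ {ω | (N : ℝ) * s ≤ (∑ n, Y n) ω}).toReal
      ≤ Real.exp (-t * ((N : ℝ) * s)) * mgf (∑ n, Y n) ℙ t := hch
    _ ≤ Real.exp (-t * ((N : ℝ) * s)) * Real.exp ((N : ℝ) * (t ^ 2 / 8)) :=
        mul_le_mul_of_nonneg_left hprod (Real.exp_pos _).le
    _ = Real.exp (-t * ((N : ℝ) * s) + (N : ℝ) * (t ^ 2 / 8)) := (Real.exp_add _ _).symm

lemma half_lemma {X : Type*} [Fintype X] (f : X → ℝ) (ε : ℝ) (htot : ∑ x, f x = 0)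
    (hω : ε ≤ ∑ x, |f x|) :
    ε / 2 ≤ ∑ x ∈ Finset.univ.filter (fun x => 0 ≤ f x), f x := by
  have hsplit := Finset.sum_filter_add_sum_filter_not Finset.univ (fun x => 0 ≤ f x) f
  have habs := Finset.sum_filter_add_sum_filter_not Finset.univ (fun x => 0 ≤ f x)
    (fun x => |f x|)
  have h1 : ∑ x ∈ Finset.univ.filter (fun x => 0 ≤ f x), |f x|
      = ∑ x ∈ Finset.univ.filter (fun x => 0 ≤ f x), f x :=
    Finset.sum_congr rfl fun x hx => abs_of_nonneg (Finset.mem_filter.mp hx).2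
  have h2 : ∑ x ∈ Finset.univ.filter (fun x => ¬ 0 ≤ f x), |f x|
      = -∑ x ∈ Finset.univ.filter (fun x => ¬ 0 ≤ f x), f x := by
    rw [← Finset.sum_neg_distrib]
    exact Finset.sum_congr rfl fun x hx => abs_of_neg (not_le.mp (Finset.mem_filter.mp hx).2)
  rw [htot] at hsplit
  rw [h1, h2] at habs
  linarith

/-- **ℓ1 concentration of the empirical distribution.** Let `p` be a
probability distribution on a finite set `X`, let `ξ 1, …, ξ N` be i.i.d. samples with law
`p` and let `p̂` be the empirical distribution. For `ε, δ ∈ (0,1)`, if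
`N ≥ max{8|X|/ε², (8/ε²)·log(2/δ)}`, then `Pr(‖p − p̂‖₁ ≥ ε) ≤ δ`. -/
theorem empirical_l1_concentration {X : Type*} [Fintype X] [MeasurableSpace X]
    [MeasurableSingletonClass X]
    {Ω : Type*} [MeasureSpace Ω] [IsProbabilityMeasure (ℙ : Measure Ω)]
    (p : X → ℝ) (hp : p ∈ stdSimplex ℝ X)
    (N : ℕ) (ξ : Fin N → Ω → X) (hmeas : ∀ n, Measurable (ξ n))
    (hindep : iIndepFun ξ ℙ)
    (hlaw : ∀ (n : Fin N) (x : X), ℙ {ω | ξ n ω = x} = ENNReal.ofReal (p x))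
    (ε δ : ℝ) (hε : ε ∈ Set.Ioo (0 : ℝ) 1) (hδ : δ ∈ Set.Ioo (0 : ℝ) 1)
    (hN : max (8 * Fintype.card X / ε ^ 2) (8 / ε ^ 2 * Real.log (2 / δ)) ≤ (N : ℝ)) :
    ℙ {ω | ε ≤ ∑ x, |p x -
        ((Finset.univ.filter fun n => ξ n ω = x).card : ℝ) / (N : ℝ)|}
      ≤ ENNReal.ofReal δ := by
  obtain ⟨hε0, hε1⟩ := hε
  obtain ⟨hδ0, hδ1⟩ := hδ
  rcases isEmpty_or_nonempty X with hX | hX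
  · have hempty : {ω : Ω | ε ≤ ∑ x, |p x -
        ((Finset.univ.filter fun n => ξ n ω = x).card : ℝ) / (N : ℝ)|} = ∅ := by
      refine Set.eq_empty_of_forall_notMem fun ω h => ?_
      rw [Set.mem_setOf_eq, Finset.univ_eq_empty, Finset.sum_empty] at h
      linarith
    rw [hempty, measure_empty]
    exact zero_le
  have hcard1 : (1 : ℝ) ≤ (Fintype.card X : ℝ) := by exact_mod_cast Fintype.card_pos
  have hε2 : (0 : ℝ) < ε ^ 2 := by positivity
  have hNpos : 0 < N := by
    have h1 := le_trans (le_max_left _ _) hN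
    have h2 : (0 : ℝ) < (N : ℝ) := lt_of_lt_of_le (by positivity) h1
    exact_mod_cast h2
  have hNr : (0 : ℝ) < (N : ℝ) := by exact_mod_cast hNpos
  have h8k : (Fintype.card X : ℝ) ≤ (N : ℝ) * ε ^ 2 / 8 := by
    have h1 := le_trans (le_max_left _ _) hN
    rw [div_le_iff₀ hε2] at h1
    linarith
  have h8l : Real.log 2 - Real.log δ ≤ (N : ℝ) * ε ^ 2 / 8 := by
    have h1 := le_trans (le_max_right _ _) hN
    rw [div_mul_eq_mul_div, div_le_iff₀ hε2] at h1
    rw [Real.log_div (by norm_num) (ne_of_gt hδ0)] at h1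
    linarith
  have hincl : {ω : Ω | ε ≤ ∑ x, |p x -
        ((Finset.univ.filter fun n => ξ n ω = x).card : ℝ) / (N : ℝ)|}
      ⊆ ⋃ A ∈ (Finset.univ : Finset (Finset X)), {ω | ε / 2 ≤ ∑ x ∈ A,
        (p x - ((Finset.univ.filter fun n => ξ n ω = x).card : ℝ) / (N : ℝ))} := by
    intro ω hω
    rw [Set.mem_setOf_eq] at hω
    have htot : ∑ x, (p x -
        ((Finset.univ.filter fun n => ξ n ω = x).card : ℝ) / (N : ℝ)) = 0 := by
      rw [Finset.sum_sub_distrib, hp.2, ← Finset.sum_div,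
        count_sum_eq (fun n => ξ n ω) Finset.univ]
      simp only [Finset.mem_univ, if_true, Finset.sum_const, Finset.card_univ,
        Fintype.card_fin, nsmul_eq_mul, mul_one]
      field_simp
      ring
    have hB := half_lemma (fun x => p x -
        ((Finset.univ.filter fun n => ξ n ω = x).card : ℝ) / (N : ℝ)) ε htot hω
    exact Set.mem_biUnion (Finset.mem_univ _) hB
  calc ℙ {ω | ε ≤ ∑ x, |p x -
        ((Finset.univ.filter fun n => ξ n ω = x).card : ℝ) / (N : ℝ)|}
      ≤ ℙ (⋃ A ∈ (Finset.univ : Finset (Finset X)), {ω | ε / 2 ≤ ∑ x ∈ A,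
        (p x - ((Finset.univ.filter fun n => ξ n ω = x).card : ℝ) / (N : ℝ))}) :=
        measure_mono hincl
    _ ≤ ∑ A ∈ (Finset.univ : Finset (Finset X)), ℙ {ω | ε / 2 ≤ ∑ x ∈ A,
        (p x - ((Finset.univ.filter fun n => ξ n ω = x).card : ℝ) / (N : ℝ))} :=
        measure_biUnion_finset_le _ _
    _ ≤ ∑ _A ∈ (Finset.univ : Finset (Finset X)), ENNReal.ofReal
        (Real.exp (-(2 * ε) * ((N : ℝ) * (ε / 2)) + (N : ℝ) * ((2 * ε) ^ 2 / 8))) :=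
        Finset.sum_le_sum fun A _ => chernoff_one_set p hp N hNpos ξ hmeas hindep hlaw
          (2 * ε) (by linarith) A (ε / 2)
    _ ≤ ENNReal.ofReal δ := by
        rw [Finset.sum_const, Finset.card_univ, Fintype.card_finset, nsmul_eq_mul]
        have hexp : -(2 * ε) * ((N : ℝ) * (ε / 2)) + (N : ℝ) * ((2 * ε) ^ 2 / 8)
            = -((N : ℝ) * ε ^ 2 / 2) := by ring
        rw [hexp, ← ENNReal.ofReal_natCast (2 ^ Fintype.card X),
          ← ENNReal.ofReal_mul (by positivity)]
        apply ENNReal.ofReal_le_ofReal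
        push_cast
        have hlog2 : Real.log 2 ≤ 1 := by
          have := Real.log_le_sub_one_of_pos (by norm_num : (0 : ℝ) < 2); linarith
        have hlog2' : 0 ≤ Real.log 2 := Real.log_nonneg one_le_two
        have hlogδ : Real.log δ < 0 := Real.log_neg hδ0 hδ1
        have hkc : (0 : ℝ) ≤ (Fintype.card X : ℝ) := by positivity
        have hkey : (Fintype.card X : ℝ) * Real.log 2 - Real.log δ
            ≤ (N : ℝ) * ε ^ 2 / 2 := by
          nlinarith [mul_le_mul_of_nonneg_left hlog2 hkc]
        calc (2 : ℝ) ^ Fintype.card X * Real.exp (-((N : ℝ) * ε ^ 2 / 2))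
            = Real.exp ((Fintype.card X : ℝ) * Real.log 2 + -((N : ℝ) * ε ^ 2 / 2)) := by
              rw [Real.exp_add, Real.exp_nat_mul, Real.exp_log (by norm_num : (0 : ℝ) < 2)]
          _ ≤ Real.exp (Real.log δ) := Real.exp_le_exp.2 (by linarith)
          _ = δ := Real.exp_log hδ0
end
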